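/- Let G be a group acting on a type α and let ⫶ be a ternary relation on subsets of α satisfying invariance, monotonicity, base monotonicity, transitivity, normality and extension. Then for all sets A, B, C, D ⊆ α: if A ⫶_D B∪C and B ⫶_D C, then A∪B ⫶_D C. -/
import Mathlib


open scoped Pointwise

/-- Proposition on shifting: if `⫶` satisfies invariance, monotonicity,
base monotonicity, transitivity, normality and extension, then
`A ⫶_D B∪C` and `B ⫶_D C` imply `A∪B ⫶_D C`. -/
theorem stmt_1 {α G : Type*} [Group G] [MulAction G α]
    (ind : Set α → Set α → Set α → Prop)
    (inv : ∀ (g : G) (A B C : Set α), ind A C B → ind (g • A) (g • C) (g • B))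
    (mono : ∀ A B C A' B' : Set α, ind A C B → A' ⊆ A → B' ⊆ B → ind A' C B')
    (base : ∀ A B C D : Set α, D ⊆ C → C ⊆ B → ind A D B → ind A C B)
    (trans : ∀ A B C D : Set α, D ⊆ C → C ⊆ B → ind B C A → ind C D A → ind B D A)
    (normal : ∀ A B C : Set α, ind A C B → ind (A ∪ C) C B)
    (ext : ∀ A B C Bhat : Set α, ind A C B → B ⊆ Bhat →
      ∃ (A' : Set α) (g : G), (∀ x ∈ B ∪ C, g • x = x) ∧ g • A = A' ∧ ind A' C Bhat)
    (A B C D : Set α) (h1 : ind A D (B ∪ C)) (h2 : ind B D C) :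
    ind (A ∪ B) D C := by
  -- Step 1: upgrade h1 to `ind A D (B ∪ C ∪ D)` using extension + invariance.
  obtain ⟨A', g, hfix, hgA, hA'⟩ :=
    ext A (B ∪ C) D (B ∪ C ∪ D) h1 Set.subset_union_left
  have hfixset : ∀ S : Set α, S ⊆ B ∪ C ∪ D → g • S = S := by
    intro S hS
    ext x
    constructor
    · rintro ⟨y, hy, rfl⟩
      simpa [hfix y (hS hy)] using hy
    · intro hx
      exact ⟨x, hx, hfix x (hS hx)⟩
  have hD : g⁻¹ • D = D := by
    conv_lhs => rw [← hfixset D (Set.subset_union_right)]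
    rw [inv_smul_smul]
  have hBCD : g⁻¹ • (B ∪ C ∪ D) = B ∪ C ∪ D := by
    conv_lhs => rw [← hfixset (B ∪ C ∪ D) subset_rfl]
    rw [inv_smul_smul]
  have h1' : ind A D (B ∪ C ∪ D) := by
    have := inv g⁻¹ A' (B ∪ C ∪ D) D hA'
    rwa [← hgA, inv_smul_smul, hD, hBCD] at this
  -- Step 2: base monotonicity to base B ∪ D, then monotonicity to right side C.
  have h3 : ind A (B ∪ D) (B ∪ C ∪ D) :=
    base A (B ∪ C ∪ D) (B ∪ D) D Set.subset_union_right
      (Set.union_subset (Set.subset_union_left.trans Set.subset_union_left)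
        Set.subset_union_right) h1'
  have h4 : ind A (B ∪ D) C :=
    mono A (B ∪ C ∪ D) (B ∪ D) A C h3 subset_rfl
      (Set.subset_union_right.trans Set.subset_union_left)
  have h5 : ind (A ∪ (B ∪ D)) (B ∪ D) C := normal _ _ _ h4
  have h6 : ind (B ∪ D) D C := normal _ _ _ h2
  have h7 : ind (A ∪ (B ∪ D)) D C :=
    trans C (A ∪ (B ∪ D)) (B ∪ D) D Set.subset_union_right Set.subset_union_right h5 h6
  exact mono _ _ _ _ _ h7
    (Set.union_subset_union_right A Set.subset_union_left) subset_rfl
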